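/- arXiv:1908.10064 — 3 statements merged into one kernel-verified Lean document; each statement's English description precedes it below -/
import Mathlib

section
/- Let C be a coalgebra over a field k with comultiplication Δ : C → C ⊗ C and counit ε : C → k. Let V ⊆ C be a coideal, i.e. a k-subspace with Δ(V) ⊆ V⊗C + C⊗V and ε(V) = 0, and let D ⊆ C be a subcoalgebra, i.e. a k-subspace with Δ(D) ⊆ D⊗D. Then V ∩ D is a coideal of D (and hence of C): Δ(V ∩ D) ⊆ (V ∩ D)⊗D + D⊗(V ∩ D) and ε(V ∩ D) = 0. -/
open TensorProduct

/-- For submodules `p q` of a module `M`, `subspaceTensor p q` is the image of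
`p ⊗ q` in `M ⊗ M`, i.e. the span of all elementary tensors `x ⊗ y` with
`x ∈ p`, `y ∈ q`. -/
noncomputable def subspaceTensor {k M : Type*} [CommRing k] [AddCommGroup M] [Module k M]
    (p q : Submodule k M) : Submodule k (M ⊗[k] M) :=
  Submodule.map₂ (TensorProduct.mk k M M) p q

/-- Let `C` be a coalgebra over a field `k`, let `V ⊆ C` be a coideal
(`Δ(V) ⊆ V⊗C + C⊗V` and `ε(V) = 0`) and let `D ⊆ C` be a subcoalgebra
(`Δ(D) ⊆ D⊗D`). Then `V ∩ D` is a coideal of `D` (hence of `C`):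
`Δ(V ∩ D) ⊆ (V ∩ D)⊗D + D⊗(V ∩ D)` and `ε(V ∩ D) = 0`. -/
theorem inf_subcoalgebra_coideal {k C : Type*} [Field k] [AddCommGroup C] [Module k C]
    [Coalgebra k C] (V D : Submodule k C)
    (hVcomul : V.map (Coalgebra.comul (R := k)) ≤ subspaceTensor V ⊤ ⊔ subspaceTensor ⊤ V)
    (hVcounit : ∀ v ∈ V, Coalgebra.counit (R := k) v = 0)
    (hD : D.map (Coalgebra.comul (R := k)) ≤ subspaceTensor D D) :
    (V ⊓ D).map (Coalgebra.comul (R := k)) ≤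
      subspaceTensor (V ⊓ D) D ⊔ subspaceTensor D (V ⊓ D) ∧
    ∀ v ∈ V ⊓ D, Coalgebra.counit (R := k) v = 0 := by
  -- Construct a projection `f : C → C` vanishing on `V`, with `x - f x ∈ V` and `f(D) ⊆ D`.
  obtain ⟨W', hW'⟩ := Submodule.exists_isCompl ((V ⊓ D).comap D.subtype)
  set W : Submodule k C := W'.map D.subtype with hWdef
  have hWD : W ≤ D := by
    rintro w ⟨⟨w, hw⟩, -, rfl⟩; exact hw
  have hWV : ∀ w ∈ W, w ∈ V → w = 0 := by
    rintro w ⟨⟨w, hwD⟩, hwW', rfl⟩ hwV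
    have : (⟨w, hwD⟩ : D) ∈ (V ⊓ D).comap D.subtype ⊓ W' :=
      ⟨⟨hwV, hwD⟩, hwW'⟩
    rw [hW'.inf_eq_bot] at this
    simpa using congrArg (D.subtype) this
  have hDsplit : ∀ d ∈ D, ∃ e ∈ V ⊓ D, ∃ w ∈ W, d = e + w := by
    intro d hd
    have : (⟨d, hd⟩ : D) ∈ (V ⊓ D).comap D.subtype ⊔ W' := by
      rw [hW'.sup_eq_top]; trivial
    obtain ⟨e, he, w, hw, hew⟩ := Submodule.mem_sup.mp this
    exact ⟨(e : C), he, w, ⟨w, hw, rfl⟩, by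
      simpa using congrArg D.subtype hew.symm⟩
  obtain ⟨U₀, hU₀⟩ := Submodule.exists_isCompl (V ⊔ W)
  set U : Submodule k C := W ⊔ U₀ with hUdef
  have hcompl : IsCompl V U := by
    constructor
    · rw [disjoint_iff_inf_le]
      rintro x ⟨hxV, hxU⟩
      obtain ⟨w, hw, u, hu, rfl⟩ := Submodule.mem_sup.mp hxU
      have huVW : u ∈ V ⊔ W := by
        have : u = (w + u) - w := by abel
        rw [this]
        exact Submodule.sub_mem _ (Submodule.mem_sup_left hxV) (Submodule.mem_sup_right hw)
      have hu0 : u = 0 := by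
        have := hU₀.inf_eq_bot
        have : u ∈ (V ⊔ W) ⊓ U₀ := ⟨huVW, hu⟩
        rwa [hU₀.inf_eq_bot, Submodule.mem_bot] at this
      subst hu0
      rw [add_zero] at hxV ⊢
      simp [hWV w hw hxV]
    · rw [codisjoint_iff]
      rw [hUdef, ← sup_assoc, hU₀.sup_eq_top]
  set f : C →ₗ[k] C := U.subtype ∘ₗ Submodule.projectionOnto U V hcompl.symm with hfdef
  have hf0 : ∀ v ∈ V, f v = 0 := by
    intro v hv
    simp [hfdef, Submodule.projectionOnto_apply_of_mem_right hcompl.symm hv]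
  have hfU : ∀ u ∈ U, f u = u := by
    intro u hu
    simp [hfdef, Submodule.projection_apply_of_mem_left hcompl.symm hu]
  have hfV : ∀ x, x - f x ∈ V := by
    intro x
    have := Submodule.projection_add_projection_eq_self hcompl x
    have hx : x - f x = (V.projectionOnto U hcompl x : C) := by
      rw [hfdef]; simp only [LinearMap.comp_apply, Submodule.subtype_apply]
      rw [sub_eq_iff_eq_add]
      exact this.symm
    rw [hx]; exact Submodule.coe_mem _
  have hfD : ∀ d ∈ D, f d ∈ D := by
    intro d hd
    obtain ⟨e, he, w, hw, rfl⟩ := hDsplit d hd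
    rw [map_add, hf0 e he.1, hfU w (Submodule.mem_sup_left hw), zero_add]
    exact hWD hw
  -- main inclusion
  constructor
  · rintro _ ⟨x, hx, rfl⟩
    have hxδD : (Coalgebra.comul (R := k)) x ∈ subspaceTensor D D :=
      hD ⟨x, hx.2, rfl⟩
    have hxδV : (Coalgebra.comul (R := k)) x ∈ subspaceTensor V ⊤ ⊔ subspaceTensor ⊤ V :=
      hVcomul ⟨x, hx.1, rfl⟩
    set δ := (Coalgebra.comul (R := k)) x with hδ
    -- (f ⊗ f) δ = 0
    have hff : TensorProduct.map f f δ = 0 := by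
      have hle : subspaceTensor V ⊤ ⊔ subspaceTensor ⊤ V ≤ LinearMap.ker (TensorProduct.map f f) := by
        apply sup_le
        · apply Submodule.map₂_le.mpr
          intro a ha b _
          simp [LinearMap.mem_ker, hf0 a ha]
        · apply Submodule.map₂_le.mpr
          intro a _ b hb
          simp [LinearMap.mem_ker, hf0 b hb]
      exact hle hxδV
    -- decompose δ
    have h1 : TensorProduct.map (LinearMap.id - f) LinearMap.id δ ∈ subspaceTensor (V ⊓ D) D := by
      have key : subspaceTensor D D ≤
          Submodule.comap (TensorProduct.map (LinearMap.id - f) LinearMap.id)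
            (subspaceTensor (V ⊓ D) D) := by
        apply Submodule.map₂_le.mpr
        intro a ha b hb
        refine Submodule.mem_comap.mpr ?_
        have : TensorProduct.map (LinearMap.id - f) LinearMap.id
            (TensorProduct.mk k C C a b) = (a - f a) ⊗ₜ[k] b := by
          simp [TensorProduct.map_tmul]
        rw [this]
        exact Submodule.apply_mem_map₂ _ ⟨hfV a, Submodule.sub_mem _ ha (hfD a ha)⟩ hb
      exact key hxδD
    have h2 : TensorProduct.map f (LinearMap.id - f) δ ∈ subspaceTensor D (V ⊓ D) := by
      have key : subspaceTensor D D ≤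
          Submodule.comap (TensorProduct.map f (LinearMap.id - f))
            (subspaceTensor D (V ⊓ D)) := by
        apply Submodule.map₂_le.mpr
        intro a ha b hb
        refine Submodule.mem_comap.mpr ?_
        have : TensorProduct.map f (LinearMap.id - f)
            (TensorProduct.mk k C C a b) = f a ⊗ₜ[k] (b - f b) := by
          simp [TensorProduct.map_tmul]
        rw [this]
        exact Submodule.apply_mem_map₂ _ (hfD a ha) ⟨hfV b, Submodule.sub_mem _ hb (hfD b hb)⟩
      exact key hxδD
    have hdecomp : δ = TensorProduct.map (LinearMap.id - f) LinearMap.id δ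
        + TensorProduct.map f (LinearMap.id - f) δ + TensorProduct.map f f δ := by
      have : TensorProduct.map (LinearMap.id - f) LinearMap.id
          + (TensorProduct.map f (LinearMap.id - f) + TensorProduct.map f f)
          = LinearMap.id := by
        rw [← TensorProduct.map_add_right, sub_add_cancel, ← TensorProduct.map_add_left,
          sub_add_cancel]
        exact TensorProduct.map_id
      calc δ = LinearMap.id δ := rfl
        _ = _ := by rw [← this]; simp [add_assoc]
    rw [hdecomp, hff, add_zero]
    exact Submodule.add_mem _ (Submodule.mem_sup_left h1) (Submodule.mem_sup_right h2)
  · intro v hv; exact hVcounit v hv.1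
end

section
/- Let H be a commutative Hopf algebra over a field k with comultiplication Δ, counit ε and antipode S. Let I ⊆ H be a Hopf ideal, i.e. an ideal of H that is a coideal (Δ(I) ⊆ I⊗H + H⊗I and ε(I) = 0) and satisfies S(I) ⊆ I. Let D ⊆ H be a k-subspace that is a subcoalgebra (Δ(D) ⊆ D⊗D) and satisfies S(D) ⊆ D. Then the ideal of H generated by I ∩ D is a Hopf ideal. (Applied to H = k[GL_n] = k[Z, 1/det Z], I the defining ideal of a closed subgroup G of GL_n, and D = k[Z,Z^{-1}]_{≤d}, this gives that the ideal of k[GL_n] generated by I(G) ∩ k[Z,Z^{-1}]_{≤d} is a Hopf ideal.) -/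
open TensorProduct

/-- A `k`-subspace `W` of a Hopf algebra `H` is a coideal if
`Δ(W) ⊆ W⊗H + H⊗W` and `ε(W) = 0`. -/
def IsCoideal {k H : Type*} [Field k] [CommRing H] [HopfAlgebra k H]
    (W : Submodule k H) : Prop :=
  W.map (Coalgebra.comul (R := k)) ≤ subspaceTensor W ⊤ ⊔ subspaceTensor ⊤ W ∧
    ∀ x ∈ W, Coalgebra.counit (R := k) x = 0

section AuxLinear


set_option maxHeartbeats 1000000 in
/-- There is a linear map `p` fixing `D` pointwise and mapping `A` into `A ⊓ D`. -/
theorem exists_proj {k V : Type*} [Field k] [AddCommGroup V] [Module k V]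
    (A D : Submodule k V) :
    ∃ p : V →ₗ[k] V, (∀ x ∈ D, p x = x) ∧ (∀ x ∈ A, p x ∈ A ⊓ D) := by
  set N : Submodule k V := A ⊓ D with hN
  obtain ⟨C1', hC1⟩ := Submodule.exists_isCompl (N.comap A.subtype)
  obtain ⟨C3, hC3⟩ := Submodule.exists_isCompl (A ⊔ D)
  set C1 : Submodule k V := C1'.map A.subtype with hC1def
  have hAeq : N ⊔ C1 = A := by
    have : (N.comap A.subtype ⊔ C1').map A.subtype = A := by
      rw [hC1.sup_eq_top, Submodule.map_top, Submodule.range_subtype]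
    rw [Submodule.map_sup, Submodule.map_comap_subtype,
      inf_of_le_right (inf_le_left : N ≤ A)] at this
    exact this
  have hC1A : C1 ≤ A := by rw [← hAeq]; exact le_sup_right
  have hcompl : IsCompl D (C1 ⊔ C3) := by
    constructor
    · rw [disjoint_iff_inf_le]
      rintro x ⟨hxD, hxE⟩
      obtain ⟨c1, hc1, c3, hc3, rfl⟩ := Submodule.mem_sup.mp hxE
      have hc3' : c3 ∈ (A ⊔ D) ⊓ C3 := by
        constructor
        · have : c1 + c3 - c1 ∈ A ⊔ D := by
            exact Submodule.sub_mem _ (Submodule.mem_sup_right hxD)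
              (Submodule.mem_sup_left (hC1A hc1))
          simpa using this
        · exact hc3
      have hc30 : c3 = 0 := by
        have := hC3.inf_eq_bot ▸ hc3'
        simpa using this
      subst hc30
      rw [add_zero] at hxD ⊢
      obtain ⟨y, hy, rfl⟩ := hc1
      have : y ∈ N.comap A.subtype ⊓ C1' := ⟨⟨(hC1A ⟨y, hy, rfl⟩ : (A.subtype y) ∈ A), hxD⟩, hy⟩
      rw [hC1.inf_eq_bot] at this
      have : y = 0 := by simpa using this
      simp [this]
    · rw [codisjoint_iff, eq_top_iff, ← hC3.sup_eq_top]
      refine sup_le (sup_le ?_ ?_) ?_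
      · rw [← hAeq]
        refine sup_le (le_trans inf_le_right le_sup_left) ?_
        exact le_trans le_sup_left le_sup_right
      · exact le_sup_left
      · exact le_trans le_sup_right le_sup_right
  refine ⟨D.subtype ∘ₗ D.projectionOnto _ hcompl, ?_, ?_⟩
  · intro x hx
    simp [Submodule.projectionOnto_apply_of_mem_left hcompl hx]
  · intro x hx
    rw [← hAeq] at hx
    obtain ⟨n, hn, c, hc, rfl⟩ := Submodule.mem_sup.mp hx
    have h1 : (D.projectionOnto _ hcompl) n = ⟨n, hn.2⟩ :=
      Submodule.projectionOnto_apply_left hcompl ⟨n, hn.2⟩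
    have h2 : (D.projectionOnto _ hcompl) c = 0 :=
      Submodule.projectionOnto_apply_of_mem_right hcompl (Submodule.mem_sup_left hc)
    simp only [LinearMap.comp_apply, map_add, h1, h2, add_zero, Submodule.coe_subtype,
      Submodule.coe_zero]
    simpa using hn

theorem inf_lemma {k V : Type*} [Field k] [AddCommGroup V] [Module k V]
    (A D : Submodule k V) {t : V ⊗[k] V}
    (h1 : t ∈ subspaceTensor A ⊤ ⊔ subspaceTensor ⊤ A)
    (h2 : t ∈ subspaceTensor D D) :
    t ∈ subspaceTensor (A ⊓ D) ⊤ ⊔ subspaceTensor ⊤ (A ⊓ D) := by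
  obtain ⟨p, hpD, hpA⟩ := exists_proj A D
  set P : V ⊗[k] V →ₗ[k] V ⊗[k] V := TensorProduct.map p p with hP
  have hfix : P t = t := by
    have hle : subspaceTensor D D ≤ LinearMap.ker (P - LinearMap.id) := by
      rw [subspaceTensor, Submodule.map₂_le]
      intro m hm n hn
      simp [LinearMap.mem_ker, hP, hpD m hm, hpD n hn]
    have := hle h2
    rw [LinearMap.mem_ker, LinearMap.sub_apply, LinearMap.id_apply, sub_eq_zero] at this
    exact this
  have himg : (subspaceTensor A ⊤ ⊔ subspaceTensor ⊤ A).map P ≤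
      subspaceTensor (A ⊓ D) ⊤ ⊔ subspaceTensor ⊤ (A ⊓ D) := by
    rw [Submodule.map_sup]
    refine sup_le ?_ ?_
    · rw [Submodule.map_le_iff_le_comap, subspaceTensor, Submodule.map₂_le]
      intro m hm n _
      refine Submodule.mem_comap.mpr (Submodule.mem_sup_left ?_)
      have : P (m ⊗ₜ[k] n) = p m ⊗ₜ[k] p n := by simp [hP]
      rw [TensorProduct.mk_apply, this]
      exact Submodule.apply_mem_map₂ _ (hpA m hm) Submodule.mem_top
    · rw [Submodule.map_le_iff_le_comap, subspaceTensor, Submodule.map₂_le]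
      intro m _ n hn
      refine Submodule.mem_comap.mpr (Submodule.mem_sup_right ?_)
      have : P (m ⊗ₜ[k] n) = p m ⊗ₜ[k] p n := by simp [hP]
      rw [TensorProduct.mk_apply, this]
      exact Submodule.apply_mem_map₂ _ Submodule.mem_top (hpA n hn)
  rw [← hfix]
  exact himg ⟨t, h1, rfl⟩

end AuxLinear

section AuxHopf

open Coalgebra HopfAlgebra


variable {k H : Type*} [Field k] [CommRing H] [HopfAlgebra k H]

lemma repr_smul_counit_right {ι : Type*} (a : H) (r : Repr k a ι) :
    ∑ i ∈ r.index, counit (R := k) (r.right i) • r.left i = a := by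
  have h2 := congrArg (TensorProduct.rid k H) (Coalgebra.sum_tmul_counit_eq r)
  rw [map_sum] at h2
  simp only [TensorProduct.rid_tmul, one_smul] at h2
  exact h2

lemma repr_smul_counit_left {ι : Type*} (a : H) (r : Repr k a ι) :
    ∑ i ∈ r.index, counit (R := k) (r.left i) • r.right i = a := by
  have h2 := congrArg (TensorProduct.lid k H) (Coalgebra.sum_counit_tmul_eq r)
  rw [map_sum] at h2
  simp only [TensorProduct.lid_tmul, one_smul] at h2
  exact h2

/-- A representation of `comul (c * d)` built from representations of `comul c`, `comul d`. -/
noncomputable def mulRepr {ι κ : Type*} {c d : H} (rc : Repr k c ι) (rd : Repr k d κ) :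
    Repr k (c * d) (ι × κ) where
  index := rc.index ×ˢ rd.index
  left := fun p => rc.left p.1 * rd.left p.2
  right := fun p => rc.right p.1 * rd.right p.2
  eq := by
    rw [Finset.sum_product, Bialgebra.comul_mul, ← rc.eq, ← rd.eq, Finset.sum_mul_sum]
    simp [Algebra.TensorProduct.tmul_mul_tmul]

noncomputable def Phi (f g h : H →ₗ[k] H) : H ⊗[k] (H ⊗[k] H) →ₗ[k] H :=
  LinearMap.mul' k H ∘ₗ (LinearMap.mul' k H).lTensor H ∘ₗ
    TensorProduct.map f (TensorProduct.map g h)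

@[simp] lemma Phi_tmul (f g h : H →ₗ[k] H) (x y z : H) :
    Phi f g h (x ⊗ₜ (y ⊗ₜ z)) = f x * (g y * h z) := by
  simp [Phi]

lemma Phi_sum (f g h : H →ₗ[k] H) {ι : Type*} {κ : ι → Type*} (s : Finset ι)
    (t : ∀ i, Finset (κ i)) (p q r : ∀ i, κ i → H) :
    Phi f g h (∑ i ∈ s, ∑ x ∈ t i, p i x ⊗ₜ[k] (q i x ⊗ₜ[k] r i x)) =
      ∑ i ∈ s, ∑ x ∈ t i, f (p i x) * (g (q i x) * h (r i x)) := by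
  rw [map_sum]
  exact Finset.sum_congr rfl fun i _ => by
    rw [map_sum]
    exact Finset.sum_congr rfl fun x _ => Phi_tmul f g h _ _ _

theorem my_antipode_mul (a b : H) :
    antipode (R := k) (a * b) = antipode (R := k) a * antipode (R := k) b := by
  set S : H →ₗ[k] H := antipode (R := k) with hS
  let ra : Repr k a (H × H) := ℛ k a
  let rb : Repr k b (H × H) := ℛ k b
  let ra1 : (i : ra.ι) → Repr k (ra.left i) (H × H) := fun i => ℛ k _
  let ra2 : (i : ra.ι) → Repr k (ra.right i) (H × H) := fun i => ℛ k _
  let rb1 : (j : rb.ι) → Repr k (rb.left j) (H × H) := fun j => ℛ k _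
  let rb2 : (j : rb.ι) → Repr k (rb.right j) (H × H) := fun j => ℛ k _
  have key_a : ∀ f g h : H →ₗ[k] H,
      (∑ i ∈ ra.index, ∑ x ∈ (ra2 i).index,
        f (ra.left i) * (g ((ra2 i).left x) * h ((ra2 i).right x)))
      = ∑ i ∈ ra.index, ∑ x ∈ (ra1 i).index,
          f ((ra1 i).left x) * (g ((ra1 i).right x) * h (ra.right i)) := by
    intro f g h
    have hc := congrArg (Phi f g h) (Coalgebra.sum_tmul_tmul_eq ra ra1 ra2)
    rw [Phi_sum f g h ra.index (fun i => (ra1 i).index) _ _ _,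
      Phi_sum f g h ra.index (fun i => (ra2 i).index) _ _ _] at hc
    exact hc.symm
  have key_b : ∀ f g h : H →ₗ[k] H,
      (∑ j ∈ rb.index, ∑ y ∈ (rb2 j).index,
        f (rb.left j) * (g ((rb2 j).left y) * h ((rb2 j).right y)))
      = ∑ j ∈ rb.index, ∑ y ∈ (rb1 j).index,
          f ((rb1 j).left y) * (g ((rb1 j).right y) * h (rb.right j)) := by
    intro f g h
    have hc := congrArg (Phi f g h) (Coalgebra.sum_tmul_tmul_eq rb rb1 rb2)
    rw [Phi_sum f g h rb.index (fun j => (rb1 j).index) _ _ _,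
      Phi_sum f g h rb.index (fun j => (rb2 j).index) _ _ _] at hc
    exact hc.symm
  set T : H := ∑ i ∈ ra.index, ∑ j ∈ rb.index, ∑ x ∈ (ra2 i).index, ∑ y ∈ (rb2 j).index,
    S (ra.left i * rb.left j) * ((ra2 i).left x * (rb2 j).left y) *
      (S ((rb2 j).right y) * S ((ra2 i).right x)) with hT
  have hA : T = S (a * b) := by
    have step1 : T = ∑ i ∈ ra.index, ∑ j ∈ rb.index,
        S (ra.left i * rb.left j) *
          ((∑ x ∈ (ra2 i).index, (ra2 i).left x * S ((ra2 i).right x)) *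
           (∑ y ∈ (rb2 j).index, (rb2 j).left y * S ((rb2 j).right y))) := by
      rw [hT]
      refine Finset.sum_congr rfl fun i _ => Finset.sum_congr rfl fun j _ => ?_
      rw [Finset.sum_mul_sum, Finset.mul_sum]
      refine Finset.sum_congr rfl fun x _ => ?_
      rw [Finset.mul_sum]
      exact Finset.sum_congr rfl fun y _ => by ring
    have step2 : T = ∑ i ∈ ra.index, ∑ j ∈ rb.index,
        S ((counit (R := k) (ra.right i) • ra.left i) *
          (counit (R := k) (rb.right j) • rb.left j)) := by
      rw [step1]
      refine Finset.sum_congr rfl fun i _ => Finset.sum_congr rfl fun j _ => ?_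
      rw [sum_mul_antipode_eq_algebraMap_counit (ra2 i),
          sum_mul_antipode_eq_algebraMap_counit (rb2 j)]
      have e : (counit (R := k) (ra.right i) • ra.left i) *
          (counit (R := k) (rb.right j) • rb.left j)
          = (counit (R := k) (ra.right i) * counit (R := k) (rb.right j)) •
            (ra.left i * rb.left j) := smul_mul_smul_comm _ _ _ _
      rw [e, map_smul, Algebra.smul_def, map_mul (algebraMap k H)]
      ring
    have step3 : T = S ((∑ i ∈ ra.index, counit (R := k) (ra.right i) • ra.left i) *
        (∑ j ∈ rb.index, counit (R := k) (rb.right j) • rb.left j)) := by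
      rw [step2, Finset.sum_mul_sum, map_sum]
      exact Finset.sum_congr rfl fun i _ => (map_sum S _ _).symm
    rw [step3, repr_smul_counit_right a ra, repr_smul_counit_right b rb]
  have hB : T = S a * S b := by
    have s1 : T = ∑ j ∈ rb.index, ∑ y ∈ (rb2 j).index, ∑ i ∈ ra.index,
        ∑ x ∈ (ra2 i).index,
        S (ra.left i * rb.left j) * ((ra2 i).left x * (rb2 j).left y) *
          (S ((rb2 j).right y) * S ((ra2 i).right x)) := by
      rw [hT, Finset.sum_comm]
      refine Finset.sum_congr rfl fun j _ => ?_
      rw [show (∑ i ∈ ra.index, ∑ x ∈ (ra2 i).index, ∑ y ∈ (rb2 j).index,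
          S (ra.left i * rb.left j) * ((ra2 i).left x * (rb2 j).left y) *
            (S ((rb2 j).right y) * S ((ra2 i).right x)))
          = ∑ i ∈ ra.index, ∑ y ∈ (rb2 j).index, ∑ x ∈ (ra2 i).index,
          S (ra.left i * rb.left j) * ((ra2 i).left x * (rb2 j).left y) *
            (S ((rb2 j).right y) * S ((ra2 i).right x))
        from Finset.sum_congr rfl fun i _ => Finset.sum_comm]
      exact Finset.sum_comm
    have s2 : T = ∑ j ∈ rb.index, ∑ y ∈ (rb2 j).index, ∑ i ∈ ra.index,
        ∑ x ∈ (ra1 i).index,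
        S ((ra1 i).left x * rb.left j) * S ((rb2 j).right y) *
          (((ra1 i).right x * (rb2 j).left y) * S (ra.right i)) := by
      rw [s1]
      refine Finset.sum_congr rfl fun j _ => Finset.sum_congr rfl fun y _ => ?_
      have h := key_a
        (LinearMap.mulRight k (S ((rb2 j).right y)) ∘ₗ S ∘ₗ LinearMap.mulRight k (rb.left j))
        (LinearMap.mulRight k ((rb2 j).left y)) S
      simp only [LinearMap.coe_comp, Function.comp_apply, LinearMap.mulRight_apply] at h
      rw [show (∑ i ∈ ra.index, ∑ x ∈ (ra2 i).index,
          S (ra.left i * rb.left j) * ((ra2 i).left x * (rb2 j).left y) *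
            (S ((rb2 j).right y) * S ((ra2 i).right x)))
          = ∑ i ∈ ra.index, ∑ x ∈ (ra2 i).index,
          S (ra.left i * rb.left j) * S ((rb2 j).right y) *
            (((ra2 i).left x * (rb2 j).left y) * S ((ra2 i).right x))
        from Finset.sum_congr rfl fun i _ => Finset.sum_congr rfl fun x _ => by ring]
      exact h
    have s3 : T = ∑ i ∈ ra.index, ∑ x ∈ (ra1 i).index, ∑ j ∈ rb.index,
        ∑ y ∈ (rb2 j).index,
        S ((ra1 i).left x * rb.left j) * S ((rb2 j).right y) *
          (((ra1 i).right x * (rb2 j).left y) * S (ra.right i)) := by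
      rw [s2]
      rw [show (∑ j ∈ rb.index, ∑ y ∈ (rb2 j).index, ∑ i ∈ ra.index, ∑ x ∈ (ra1 i).index,
          S ((ra1 i).left x * rb.left j) * S ((rb2 j).right y) *
            (((ra1 i).right x * (rb2 j).left y) * S (ra.right i)))
          = ∑ j ∈ rb.index, ∑ i ∈ ra.index, ∑ y ∈ (rb2 j).index, ∑ x ∈ (ra1 i).index,
          S ((ra1 i).left x * rb.left j) * S ((rb2 j).right y) *
            (((ra1 i).right x * (rb2 j).left y) * S (ra.right i))
        from Finset.sum_congr rfl fun j _ => Finset.sum_comm]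
      rw [Finset.sum_comm]
      refine Finset.sum_congr rfl fun i _ => ?_
      rw [show (∑ j ∈ rb.index, ∑ y ∈ (rb2 j).index, ∑ x ∈ (ra1 i).index,
          S ((ra1 i).left x * rb.left j) * S ((rb2 j).right y) *
            (((ra1 i).right x * (rb2 j).left y) * S (ra.right i)))
          = ∑ j ∈ rb.index, ∑ x ∈ (ra1 i).index, ∑ y ∈ (rb2 j).index,
          S ((ra1 i).left x * rb.left j) * S ((rb2 j).right y) *
            (((ra1 i).right x * (rb2 j).left y) * S (ra.right i))
        from Finset.sum_congr rfl fun j _ => Finset.sum_comm]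
      exact Finset.sum_comm
    have s4 : T = ∑ i ∈ ra.index, ∑ x ∈ (ra1 i).index, ∑ j ∈ rb.index,
        ∑ y ∈ (rb1 j).index,
        S ((ra1 i).left x * (rb1 j).left y) *
          (((ra1 i).right x * (rb1 j).right y) * (S (rb.right j) * S (ra.right i))) := by
      rw [s3]
      refine Finset.sum_congr rfl fun i _ => Finset.sum_congr rfl fun x _ => ?_
      have h := key_b
        (S ∘ₗ LinearMap.mulLeft k ((ra1 i).left x))
        (LinearMap.mulLeft k ((ra1 i).right x))
        (LinearMap.mulRight k (S (ra.right i)) ∘ₗ S)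
      simp only [LinearMap.coe_comp, Function.comp_apply, LinearMap.mulLeft_apply,
        LinearMap.mulRight_apply] at h
      rw [show (∑ j ∈ rb.index, ∑ y ∈ (rb2 j).index,
          S ((ra1 i).left x * rb.left j) * S ((rb2 j).right y) *
            (((ra1 i).right x * (rb2 j).left y) * S (ra.right i)))
          = ∑ j ∈ rb.index, ∑ y ∈ (rb2 j).index,
          S ((ra1 i).left x * rb.left j) *
            (((ra1 i).right x * (rb2 j).left y) * (S ((rb2 j).right y) * S (ra.right i)))
        from Finset.sum_congr rfl fun j _ => Finset.sum_congr rfl fun y _ => by ring]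
      exact h
    have s5 : T = ∑ i ∈ ra.index, ∑ j ∈ rb.index, ∑ x ∈ (ra1 i).index,
        ∑ y ∈ (rb1 j).index,
        S ((ra1 i).left x * (rb1 j).left y) *
          (((ra1 i).right x * (rb1 j).right y) * (S (rb.right j) * S (ra.right i))) := by
      rw [s4]
      exact Finset.sum_congr rfl fun i _ => Finset.sum_comm
    have s6 : T = ∑ i ∈ ra.index, ∑ j ∈ rb.index,
        algebraMap k H (counit (R := k) (ra.left i) * counit (R := k) (rb.left j)) *
          (S (rb.right j) * S (ra.right i)) := by
      rw [s5]
      refine Finset.sum_congr rfl fun i _ => Finset.sum_congr rfl fun j _ => ?_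
      have h := sum_antipode_mul_eq_algebraMap_counit (R := k) (mulRepr (ra1 i) (rb1 j))
      dsimp only [mulRepr] at h
      rw [Finset.sum_product] at h
      rw [show (∑ x ∈ (ra1 i).index, ∑ y ∈ (rb1 j).index,
          S ((ra1 i).left x * (rb1 j).left y) *
            (((ra1 i).right x * (rb1 j).right y) * (S (rb.right j) * S (ra.right i))))
          = (∑ x ∈ (ra1 i).index, ∑ y ∈ (rb1 j).index,
            S ((ra1 i).left x * (rb1 j).left y) *
              ((ra1 i).right x * (rb1 j).right y)) * (S (rb.right j) * S (ra.right i)) by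
        rw [Finset.sum_mul]
        refine Finset.sum_congr rfl fun x _ => ?_
        rw [Finset.sum_mul]
        exact Finset.sum_congr rfl fun y _ => by ring]
      rw [h, Bialgebra.counit_mul]
    have s7 : T = (∑ i ∈ ra.index, counit (R := k) (ra.left i) • S (ra.right i)) *
        (∑ j ∈ rb.index, counit (R := k) (rb.left j) • S (rb.right j)) := by
      rw [s6, Finset.sum_mul_sum]
      refine Finset.sum_congr rfl fun i _ => Finset.sum_congr rfl fun j _ => ?_
      have e : (counit (R := k) (ra.left i) • S (ra.right i)) *
          (counit (R := k) (rb.left j) • S (rb.right j))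
          = (counit (R := k) (ra.left i) * counit (R := k) (rb.left j)) •
            (S (ra.right i) * S (rb.right j)) := smul_mul_smul_comm _ _ _ _
      rw [e, Algebra.smul_def, map_mul (algebraMap k H)]
      ring
    have ha : (∑ i ∈ ra.index, counit (R := k) (ra.left i) • S (ra.right i)) = S a := by
      rw [show (∑ i ∈ ra.index, counit (R := k) (ra.left i) • S (ra.right i))
          = S (∑ i ∈ ra.index, counit (R := k) (ra.left i) • ra.right i) by
        rw [map_sum]
        exact Finset.sum_congr rfl fun i _ => (map_smul S _ _).symm]
      rw [repr_smul_counit_left a ra]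
    have hb : (∑ j ∈ rb.index, counit (R := k) (rb.left j) • S (rb.right j)) = S b := by
      rw [show (∑ j ∈ rb.index, counit (R := k) (rb.left j) • S (rb.right j))
          = S (∑ j ∈ rb.index, counit (R := k) (rb.left j) • rb.right j) by
        rw [map_sum]
        exact Finset.sum_congr rfl fun j _ => (map_smul S _ _).symm]
      rw [repr_smul_counit_left b rb]
    rw [s7, ha, hb]
  rw [← hA, hB]

end AuxHopf

/-- Let `H` be a commutative Hopf algebra over a field `k` with antipode `S`.
Let `I ⊆ H` be a Hopf ideal (an ideal which is a coideal and satisfies `S(I) ⊆ I`)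
and let `D ⊆ H` be a subcoalgebra (`Δ(D) ⊆ D⊗D`) with `S(D) ⊆ D`. Then the ideal
of `H` generated by `I ∩ D` is again a Hopf ideal. -/

theorem ideal_span_inf_subcoalgebra_is_hopf_ideal {k H : Type*} [Field k] [CommRing H]
    [HopfAlgebra k H] (I : Ideal H) (D : Submodule k H)
    (hIcoideal : IsCoideal (I.restrictScalars k))
    (hIantipode : ∀ x ∈ I, HopfAlgebra.antipode (R := k) x ∈ I)
    (hDcomul : D.map (Coalgebra.comul (R := k)) ≤ subspaceTensor D D)
    (hDantipode : ∀ x ∈ D, HopfAlgebra.antipode (R := k) x ∈ D) :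
    IsCoideal ((Ideal.span ((I.restrictScalars k ⊓ D : Submodule k H) : Set H)).restrictScalars k)
      ∧ ∀ x ∈ Ideal.span ((I.restrictScalars k ⊓ D : Submodule k H) : Set H),
          HopfAlgebra.antipode (R := k) x ∈
            Ideal.span ((I.restrictScalars k ⊓ D : Submodule k H) : Set H) := by
  set A : Submodule k H := I.restrictScalars k with hA
  set N : Submodule k H := A ⊓ D with hNdef
  set J : Ideal H := Ideal.span (N : Set H) with hJ
  have hNJ : N ≤ J.restrictScalars k := fun x hx => Ideal.subset_span hx
  -- the subspace `J ⊗ H + H ⊗ J` is closed under multiplication by elements of `H ⊗ H`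
  have hleft : ∀ u : H ⊗[k] H, ∀ t ∈ subspaceTensor (J.restrictScalars k) (⊤ : Submodule k H),
      u * t ∈ subspaceTensor (J.restrictScalars k) (⊤ : Submodule k H) := by
    intro u
    induction u using TensorProduct.induction_on with
    | zero =>
        intro t ht
        rw [zero_mul]
        exact Submodule.zero_mem _
    | tmul c d =>
        intro t ht
        have hle : subspaceTensor (J.restrictScalars k) (⊤ : Submodule k H) ≤
            Submodule.comap (LinearMap.mulLeft k (c ⊗ₜ[k] d))
              (subspaceTensor (J.restrictScalars k) ⊤) := by
          rw [subspaceTensor, Submodule.map₂_le]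
          intro m hm n _
          simp only [Submodule.mem_comap, TensorProduct.mk_apply, LinearMap.mulLeft_apply]
          rw [Algebra.TensorProduct.tmul_mul_tmul]
          exact Submodule.apply_mem_map₂ _ (Ideal.mul_mem_left J c hm) Submodule.mem_top
        have := hle ht
        simpa [LinearMap.mulLeft_apply] using this
    | add u v hu hv =>
        intro t ht
        rw [add_mul]
        exact Submodule.add_mem _ (hu t ht) (hv t ht)
  have hright : ∀ u : H ⊗[k] H, ∀ t ∈ subspaceTensor (⊤ : Submodule k H) (J.restrictScalars k),
      u * t ∈ subspaceTensor (⊤ : Submodule k H) (J.restrictScalars k) := by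
    intro u
    induction u using TensorProduct.induction_on with
    | zero =>
        intro t ht
        rw [zero_mul]
        exact Submodule.zero_mem _
    | tmul c d =>
        intro t ht
        have hle : subspaceTensor (⊤ : Submodule k H) (J.restrictScalars k) ≤
            Submodule.comap (LinearMap.mulLeft k (c ⊗ₜ[k] d))
              (subspaceTensor ⊤ (J.restrictScalars k)) := by
          rw [subspaceTensor, Submodule.map₂_le]
          intro m _ n hn
          simp only [Submodule.mem_comap, TensorProduct.mk_apply, LinearMap.mulLeft_apply]
          rw [Algebra.TensorProduct.tmul_mul_tmul]
          exact Submodule.apply_mem_map₂ _ Submodule.mem_top (Ideal.mul_mem_left J d hn)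
        have := hle ht
        simpa [LinearMap.mulLeft_apply] using this
    | add u v hu hv =>
        intro t ht
        rw [add_mul]
        exact Submodule.add_mem _ (hu t ht) (hv t ht)
  have hSJclosed : ∀ u t : H ⊗[k] H,
      t ∈ subspaceTensor (J.restrictScalars k) ⊤ ⊔ subspaceTensor ⊤ (J.restrictScalars k) →
      u * t ∈ subspaceTensor (J.restrictScalars k) ⊤ ⊔
        subspaceTensor ⊤ (J.restrictScalars k) := by
    intro u t ht
    obtain ⟨t1, ht1, t2, ht2, rfl⟩ := Submodule.mem_sup.mp ht
    rw [mul_add]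
    exact Submodule.add_mem _ (Submodule.mem_sup_left (hleft u t1 ht1))
      (Submodule.mem_sup_right (hright u t2 ht2))
  refine ⟨⟨?_, ?_⟩, ?_⟩
  · -- comultiplication part
    rintro _ ⟨x, hx, rfl⟩
    have hx' : x ∈ Ideal.span (N : Set H) := hx
    clear hx
    induction hx' using Submodule.span_induction with
    | mem x hxN =>
        have hxN' : x ∈ N := hxN
        have h1 : Coalgebra.comul (R := k) x ∈ subspaceTensor A ⊤ ⊔ subspaceTensor ⊤ A :=
          hIcoideal.1 ⟨x, hxN'.1, rfl⟩
        have h2 : Coalgebra.comul (R := k) x ∈ subspaceTensor D D :=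
          hDcomul ⟨x, hxN'.2, rfl⟩
        have h3 := inf_lemma A D h1 h2
        exact (sup_le_sup (Submodule.map₂_le_map₂_left hNJ)
          (Submodule.map₂_le_map₂_right hNJ) : subspaceTensor N ⊤ ⊔ subspaceTensor ⊤ N ≤ _) h3
    | zero =>
        rw [map_zero]
        exact Submodule.zero_mem _
    | add u v _ _ hu hv =>
        rw [map_add]
        exact Submodule.add_mem _ hu hv
    | smul a u _ hu =>
        rw [smul_eq_mul, Bialgebra.comul_mul]
        exact hSJclosed _ _ hu
  · -- counit part
    intro x hx
    have hx' : x ∈ Ideal.span (N : Set H) := hx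
    clear hx
    induction hx' using Submodule.span_induction with
    | mem x hxN =>
        have hxN' : x ∈ N := hxN
        exact hIcoideal.2 x hxN'.1
    | zero => rw [map_zero]
    | add u v _ _ hu hv => rw [map_add, hu, hv, add_zero]
    | smul a u _ hu => rw [smul_eq_mul, Bialgebra.counit_mul, hu, mul_zero]
  · -- antipode part
    intro x hx
    induction hx using Submodule.span_induction with
    | mem x hxN =>
        have hxN' : x ∈ N := hxN
        exact Ideal.subset_span
          (show HopfAlgebra.antipode (R := k) x ∈ (N : Set H) from
            ⟨hIantipode x hxN'.1, hDantipode x hxN'.2⟩)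
    | zero =>
        rw [map_zero]
        exact Ideal.zero_mem J
    | add u v _ _ hu hv =>
        rw [map_add]
        exact Ideal.add_mem J hu hv
    | smul a u _ hu =>
        rw [smul_eq_mul, my_antipode_mul]
        exact Ideal.mul_mem_left J _ hu
end

section
/- Fix integers n, s ≥ 1, 1 ≤ r ≤ s, indices 1 ≤ i₁ < ⋯ < i_r ≤ s, an integer d ≥ 0, and an s×s matrix B whose entries are polynomials with integer coefficients in 2n² variables of total degree at most d (to be evaluated at the entries of an invertible n×n matrix g and of g^{-1}). Then there exist (s−r)·r expressions Q₁,…,Q_{(s−r)r}, each a polynomial with integer coefficients in the sr entries of an s×r matrix of variables T, in the inverse of det((T_{i_ℓ,j})_{1≤ℓ,j≤r}), and in 2n² further variables in which it has total degree at most d, such that the following holds: for every field k, every matrix A ∈ k^{s×r} with det((A_{i_ℓ,j})_{1≤ℓ,j≤r}) ≠ 0, every commutative k-algebra R and every g ∈ GL_n(R), the R-submodule of R^s generated by the columns of A is mapped into itself by the matrix B(g, g^{-1}) ∈ M_s(R) if and only if Q_i(A, g, g^{-1}) = 0 in R for all i = 1,…,(s−r)r. Here B(g, g^{-1}) denotes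 the entrywise evaluation of B with the first n² variables set to the entries of g and the last n² to the entries of g^{-1}, and Q_i(A, g, g^{-1}) denotes evaluation with T set to A and the remaining variables set to the entries of g and g^{-1}. -/
namespace UDS

open MvPolynomial Matrix

variable {n s r : ℕ}

abbrev ι (n s r : ℕ) := (Fin s × Fin r) ⊕ (Unit ⊕ (Fin 2 × Fin n × Fin n))
abbrev ι₀ (s r : ℕ) := (Fin s × Fin r) ⊕ Unit

noncomputable def Tmat (s r : ℕ) : Matrix (Fin s) (Fin r) (MvPolynomial (ι₀ s r) ℤ) :=
  Matrix.of fun a j => X (Sum.inl (a, j))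

noncomputable def Cmat (s r : ℕ) (idx : Fin r → Fin s) :
    Matrix (Fin s) (Fin r) (MvPolynomial (ι₀ s r) ℤ) :=
  ((Tmat s r) * adjugate ((Tmat s r).submatrix idx id)).map (· * X (Sum.inr ()))

def emb (n s r : ℕ) : ι₀ s r → ι n s r := Sum.map id Sum.inl

lemma emb_injective : Function.Injective (emb n s r) :=
  Sum.map_injective.2 ⟨Function.injective_id, Sum.inl_injective⟩

noncomputable def MCprod (n : ℕ) (idx : Fin r → Fin s)
    (B : Matrix (Fin s) (Fin s) (MvPolynomial (Fin 2 × Fin n × Fin n) ℤ)) :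
    Matrix (Fin s) (Fin r) (MvPolynomial (ι n s r) ℤ) :=
  (B.map (rename (Sum.inr ∘ Sum.inr : _ → ι n s r))) * ((Cmat s r idx).map (rename (emb n s r)))

noncomputable def Emat (n : ℕ) (idx : Fin r → Fin s)
    (B : Matrix (Fin s) (Fin s) (MvPolynomial (Fin 2 × Fin n × Fin n) ℤ)) :
    Matrix (Fin s) (Fin r) (MvPolynomial (ι n s r) ℤ) :=
  MCprod n idx B
    - ((Cmat s r idx).map (rename (emb n s r))) * ((MCprod n idx B).submatrix idx id)

/-- the total degree of a monomial in the `g`-variables -/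
def gD (n s r : ℕ) (m : ι n s r →₀ ℕ) : ℕ :=
  ∑ v : Fin 2 × Fin n × Fin n, m (Sum.inr (Sum.inr v))

lemma gD_add (m₁ m₂ : ι n s r →₀ ℕ) : gD n s r (m₁ + m₂) = gD n s r m₁ + gD n s r m₂ := by
  simp [gD, Finset.sum_add_distrib]

/-- polynomials all of whose monomials have `g`-degree `≤ d` -/
def GDle (n s r d : ℕ) (p : MvPolynomial (ι n s r) ℤ) : Prop :=
  ∀ m ∈ p.support, gD n s r m ≤ d

variable {d : ℕ}

lemma GDle.add {p q} (hp : GDle n s r d p) (hq : GDle n s r d q) : GDle n s r d (p + q) := by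
  intro m hm
  rcases Finset.mem_union.1 (MvPolynomial.support_add hm) with h | h
  · exact hp m h
  · exact hq m h

lemma GDle.neg {p} (hp : GDle n s r d p) : GDle n s r d (-p) := by
  intro m hm; exact hp m (by rwa [support_neg] at hm)

lemma GDle.sub {p q} (hp : GDle n s r d p) (hq : GDle n s r d q) : GDle n s r d (p - q) := by
  rw [sub_eq_add_neg]; exact hp.add hq.neg

lemma GDle.sum {α : Type*} (t : Finset α) (F : α → MvPolynomial (ι n s r) ℤ)
    (h : ∀ a ∈ t, GDle n s r d (F a)) : GDle n s r d (∑ a ∈ t, F a) := by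
  classical
  induction t using Finset.induction_on with
  | empty => intro m hm; simp at hm
  | insert _ _ hx ih =>
    rename_i a t'
    rw [Finset.sum_insert hx]
    exact (h a (Finset.mem_insert_self a t')).add (ih fun b hb => h b (Finset.mem_insert_of_mem hb))

lemma gD_rename_emb (p : MvPolynomial (ι₀ s r) ℤ) :
    ∀ m ∈ (rename (emb n s r) p).support, gD n s r m = 0 := by
  classical
  intro m hm
  rw [support_rename_of_injective emb_injective] at hm
  obtain ⟨m₀, _, rfl⟩ := Finset.mem_image.1 hm
  refine Finset.sum_eq_zero fun v _ => ?_
  refine Finsupp.mapDomain_notin_range _ _ ?_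
  rintro ⟨x, hx⟩
  cases x with
  | inl x => simp [emb] at hx
  | inr x => simp [emb] at hx

lemma GDle.mul_emb {p : MvPolynomial (ι n s r) ℤ} (q : MvPolynomial (ι₀ s r) ℤ)
    (hp : GDle n s r d p) : GDle n s r d (p * rename (emb n s r) q) := by
  classical
  intro m hm
  obtain ⟨m₁, hm₁, m₂, hm₂, rfl⟩ := Finset.mem_add.1 (MvPolynomial.support_mul _ _ hm)
  rw [gD_add, gD_rename_emb q m₂ hm₂, add_zero]
  exact hp m₁ hm₁

lemma GDle.emb_mul {p : MvPolynomial (ι n s r) ℤ} (q : MvPolynomial (ι₀ s r) ℤ)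
    (hp : GDle n s r d p) : GDle n s r d (rename (emb n s r) q * p) := by
  rw [mul_comm]; exact hp.mul_emb q

lemma GDle.rename_g {b : MvPolynomial (Fin 2 × Fin n × Fin n) ℤ} (hb : b.totalDegree ≤ d) :
    GDle n s r d (rename (Sum.inr ∘ Sum.inr : _ → ι n s r) b) := by
  classical
  intro m hm
  have hinj : Function.Injective (Sum.inr ∘ Sum.inr : (Fin 2 × Fin n × Fin n) → ι n s r) :=
    Sum.inr_injective.comp Sum.inr_injective
  rw [support_rename_of_injective hinj] at hm
  obtain ⟨m₀, hm₀, rfl⟩ := Finset.mem_image.1 hm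
  have : gD n s r (Finsupp.mapDomain (Sum.inr ∘ Sum.inr) m₀) = m₀.sum fun _ e => e := by
    rw [Finsupp.sum_fintype _ _ (fun _ => rfl)]
    exact Finset.sum_congr rfl fun v _ => Finsupp.mapDomain_apply hinj m₀ v
  rw [this]
  exact le_trans (MvPolynomial.le_totalDegree hm₀) hb

lemma Emat_GDle (idx : Fin r → Fin s)
    (B : Matrix (Fin s) (Fin s) (MvPolynomial (Fin 2 × Fin n × Fin n) ℤ))
    (hB : ∀ a b, (B a b).totalDegree ≤ d) (a : Fin s) (j : Fin r) :
    GDle n s r d (Emat n idx B a j) := by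
  classical
  have hMC : ∀ (a : Fin s) (j : Fin r), GDle n s r d (MCprod n idx B a j) := by
    intro a j
    rw [MCprod, Matrix.mul_apply]
    refine GDle.sum _ _ fun b _ => ?_
    exact (GDle.rename_g (hB a b)).mul_emb _
  rw [Emat, Matrix.sub_apply]
  refine GDle.sub (hMC a j) ?_
  rw [Matrix.mul_apply]
  refine GDle.sum _ _ fun ℓ _ => ?_
  exact (hMC (idx ℓ) j).emb_mul _

section eval

variable (idx : Fin r → Fin s) {k : Type*} [Field k]
  (A : Matrix (Fin s) (Fin r) k)
  (R : Type*) [CommRing R] [Algebra k R]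

lemma Cmat_eval (hA : (A.submatrix idx id).det ≠ 0) :
    (Cmat s r idx).map
      (aeval (Sum.elim (fun p : Fin s × Fin r => algebraMap k R (A p.1 p.2))
        (fun _ : Unit => algebraMap k R ((A.submatrix idx id).det)⁻¹)))
      = (A * (A.submatrix idx id)⁻¹).map (algebraMap k R) := by
  classical
  set T := Tmat s r with hT
  set φ := Sum.elim (fun p : Fin s × Fin r => algebraMap k R (A p.1 p.2))
        (fun _ : Unit => algebraMap k R ((A.submatrix idx id).det)⁻¹) with hφ
  set f := (MvPolynomial.aeval φ : MvPolynomial _ ℤ →ₐ[ℤ] R).toRingHom with hf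
  have hTmap : T.map f = A.map (algebraMap k R) := by
    ext a j
    simp [hT, Tmat, hf, hφ]
  have key : (T * adjugate (T.submatrix idx id)).map f
      = (A.map (algebraMap k R)) * adjugate ((A.map (algebraMap k R)).submatrix idx id) := by
    have h2 : (T.submatrix idx id).map f = (A.map (algebraMap k R)).submatrix idx id := by
      ext a j; simp [hT, Tmat, hf, hφ]
    have h3 : (adjugate (T.submatrix idx id)).map f
        = adjugate ((A.map (algebraMap k R)).submatrix idx id) := by
      rw [← h2]; exact RingHom.map_adjugate f (T.submatrix idx id)
    rw [Matrix.map_mul (f := f), hTmap, h3]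
  ext a j
  have hinv : (A.submatrix idx id)⁻¹
      = ((A.submatrix idx id).det)⁻¹ • adjugate (A.submatrix idx id) := by
    rw [Matrix.inv_def, Ring.inverse_eq_inv']
  have hadjA : adjugate ((A.map (algebraMap k R)).submatrix idx id)
      = (adjugate (A.submatrix idx id)).map (algebraMap k R) := by
    have h := RingHom.map_adjugate (algebraMap k R) (A.submatrix idx id)
    have h2 : (A.submatrix idx id).map (algebraMap k R)
        = (A.map (algebraMap k R)).submatrix idx id := by
      ext; simp
    rw [← h2]; exact h.symm
  have hstep : (((T * adjugate (T.submatrix idx id)).map (· * X (Sum.inr ()))).map ⇑f) a j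
      = ((T * adjugate (T.submatrix idx id)).map f) a j * f (X (Sum.inr ())) := by
    simp [Matrix.map_apply, _root_.map_mul]
  calc (((T * adjugate (T.submatrix idx id)).map (· * X (Sum.inr ()))).map ⇑f) a j
      = ((T * adjugate (T.submatrix idx id)).map f) a j * f (X (Sum.inr ())) := hstep
    _ = ((A.map (algebraMap k R)) * adjugate ((A.map (algebraMap k R)).submatrix idx id)) a j
        * algebraMap k R ((A.submatrix idx id).det)⁻¹ := by rw [key]; simp [hf, hφ]
    _ = algebraMap k R ((A * adjugate (A.submatrix idx id)) a j * ((A.submatrix idx id).det)⁻¹) := by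
        rw [hadjA, _root_.map_mul]
        congr 1
        rw [show (A.map (algebraMap k R)) * ((adjugate (A.submatrix idx id)).map (algebraMap k R))
            = (A * adjugate (A.submatrix idx id)).map (algebraMap k R) from (Matrix.map_mul).symm]
        rfl
    _ = algebraMap k R ((A * (A.submatrix idx id)⁻¹) a j) := by
        congr 1
        rw [hinv, Matrix.mul_smul, Matrix.smul_apply, smul_eq_mul, mul_comm]
    _ = ((A * (A.submatrix idx id)⁻¹).map (algebraMap k R)) a j := rfl

end eval

section spans

variable {R : Type*} [CommRing R] {t : ℕ}

lemma span_cols_mul_le (M : Matrix (Fin s) (Fin r) R) (P : Matrix (Fin r) (Fin t) R) :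
    Submodule.span R (Set.range fun j : Fin t => fun a : Fin s => (M * P) a j)
      ≤ Submodule.span R (Set.range fun j : Fin r => fun a : Fin s => M a j) := by
  rw [Submodule.span_le]
  rintro _ ⟨j, rfl⟩
  rw [SetLike.mem_coe, Submodule.mem_span_range_iff_exists_fun]
  refine ⟨fun c => P c j, ?_⟩
  funext a
  simp [Matrix.mul_apply, Finset.sum_apply, mul_comm]

lemma mem_span_cols_iff (idx : Fin r → Fin s) (C : Matrix (Fin s) (Fin r) R)
    (hC : C.submatrix idx id = 1) (w : Fin s → R) :
    w ∈ Submodule.span R (Set.range fun j : Fin r => fun a : Fin s => C a j)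
      ↔ C.mulVec (fun ℓ => w (idx ℓ)) = w := by
  constructor
  · intro hw
    obtain ⟨c, hc⟩ := (Submodule.mem_span_range_iff_exists_fun R).1 hw
    have hcw : ∀ ℓ, w (idx ℓ) = c ℓ := by
      intro ℓ
      rw [← hc]
      have h1 : ∀ m, C (idx ℓ) m = (1 : Matrix (Fin r) (Fin r) R) ℓ m := by
        intro m; rw [← hC]; rfl
      simp only [Finset.sum_apply, Pi.smul_apply, smul_eq_mul, h1]
      simp [Matrix.one_apply, Finset.sum_ite_eq']
    have h2 : (fun ℓ => w (idx ℓ)) = c := funext hcw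
    rw [h2]
    funext a
    rw [← hc]
    simp [Matrix.mulVec, dotProduct, Finset.sum_apply, mul_comm]
  · intro hw
    rw [← hw, Submodule.mem_span_range_iff_exists_fun]
    exact ⟨fun ℓ => w (idx ℓ), by funext a; simp [Matrix.mulVec, dotProduct, mul_comm]⟩

end spans

lemma main_aux (idx : Fin r → Fin s)
    (B : Matrix (Fin s) (Fin s) (MvPolynomial (Fin 2 × Fin n × Fin n) ℤ))
    {k : Type*} [Field k] (A : Matrix (Fin s) (Fin r) k)
    (hA : (A.submatrix idx id).det ≠ 0)
    (R : Type*) [CommRing R] [Algebra k R] (ψ : Fin 2 × Fin n × Fin n → R) :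
    ((∀ w ∈ Submodule.span R
        (Set.range fun j : Fin r => fun a : Fin s => algebraMap k R (A a j)),
      (B.map fun p => aeval ψ p).mulVec w ∈ Submodule.span R
        (Set.range fun j : Fin r => fun a : Fin s => algebraMap k R (A a j))) ↔
      ∀ a : Fin s, a ∉ Set.range idx → ∀ j : Fin r,
        aeval (Sum.elim (fun p : Fin s × Fin r => algebraMap k R (A p.1 p.2))
          (Sum.elim (fun _ : Unit => algebraMap k R ((A.submatrix idx id).det)⁻¹) ψ))
          (Emat n idx B a j) = 0) := by
  classical
  have hdetU : IsUnit (A.submatrix idx id).det := isUnit_iff_ne_zero.2 hA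
  set φ := Sum.elim (fun p : Fin s × Fin r => algebraMap k R (A p.1 p.2))
    (Sum.elim (fun _ : Unit => algebraMap k R ((A.submatrix idx id).det)⁻¹) ψ) with hφ
  set C : Matrix (Fin s) (Fin r) R := (A * (A.submatrix idx id)⁻¹).map (algebraMap k R) with hCdef
  set Mm : Matrix (Fin s) (Fin s) R := B.map fun p => aeval ψ p with hMm
  set N : Matrix (Fin s) (Fin r) R := Mm * C with hN
  have hAC : (A * (A.submatrix idx id)⁻¹) * (A.submatrix idx id) = A := by
    rw [Matrix.mul_assoc, Matrix.nonsing_inv_mul _ hdetU, Matrix.mul_one]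
  -- span equality
  have hspan1 : Submodule.span R
      (Set.range fun j : Fin r => fun a : Fin s => algebraMap k R (A a j))
      = Submodule.span R (Set.range fun j : Fin r => fun a : Fin s => C a j) := by
    apply le_antisymm
    · have h := span_cols_mul_le (M := C) (P := ((A.submatrix idx id).map (algebraMap k R)))
      have he : C * (A.submatrix idx id).map (algebraMap k R) = A.map (algebraMap k R) := by
        rw [hCdef, ← Matrix.map_mul, hAC]
      rw [he] at h
      exact h
    · have h := span_cols_mul_le (M := A.map (algebraMap k R))
        (P := ((A.submatrix idx id)⁻¹).map (algebraMap k R))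
      have he : (A.map (algebraMap k R)) * ((A.submatrix idx id)⁻¹).map (algebraMap k R) = C := by
        rw [hCdef, ← Matrix.map_mul]
      rw [he] at h
      exact h
  -- identity rows
  have hk1 : (A * (A.submatrix idx id)⁻¹).submatrix idx id = (1 : Matrix (Fin r) (Fin r) k) := by
    have hm := Matrix.mul_nonsing_inv _ hdetU
    ext ℓ m
    rw [← hm]
    simp [Matrix.mul_apply, Matrix.submatrix_apply]
  have hC1 : C.submatrix idx id = 1 := by
    have h0 : C.submatrix idx id
        = ((A * (A.submatrix idx id)⁻¹).submatrix idx id).map (algebraMap k R) := rfl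
    rw [h0, hk1, Matrix.map_one _ (map_zero _) (map_one _)]
  -- evaluation facts
  have hCval : ∀ (b : Fin s) (j : Fin r),
      aeval φ (((Cmat s r idx).map (rename (emb n s r))) b j) = C b j := by
    intro b j
    have h1 : ((Cmat s r idx).map (rename (emb n s r))) b j
        = rename (emb n s r) (Cmat s r idx b j) := rfl
    rw [h1, aeval_rename]
    have hcomp : φ ∘ emb n s r = Sum.elim (fun p : Fin s × Fin r => algebraMap k R (A p.1 p.2))
        (fun _ : Unit => algebraMap k R ((A.submatrix idx id).det)⁻¹) := by
      funext x
      cases x with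
      | inl p => rfl
      | inr u => rfl
    rw [hcomp]
    have := Cmat_eval idx A R hA
    exact congrFun (congrFun this b) j
  have hMval : ∀ (a b : Fin s),
      aeval φ ((B.map (rename (Sum.inr ∘ Sum.inr : _ → ι n s r))) a b) = Mm a b := by
    intro a b
    have h1 : (B.map (rename (Sum.inr ∘ Sum.inr : _ → ι n s r))) a b
        = rename (Sum.inr ∘ Sum.inr : _ → ι n s r) (B a b) := rfl
    rw [h1, aeval_rename]
    rfl
  have hMC : ∀ (a : Fin s) (j : Fin r), aeval φ (MCprod n idx B a j) = N a j := by
    intro a j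
    rw [MCprod, Matrix.mul_apply, map_sum, hN, Matrix.mul_apply]
    refine Finset.sum_congr rfl fun b _ => ?_
    rw [_root_.map_mul, hMval, hCval]
  have hEval : ∀ (a : Fin s) (j : Fin r),
      aeval φ (Emat n idx B a j) = N a j - ∑ ℓ, C a ℓ * N (idx ℓ) j := by
    intro a j
    rw [Emat, Matrix.sub_apply, map_sub, hMC, Matrix.mul_apply, map_sum]
    congr 1
    refine Finset.sum_congr rfl fun ℓ _ => ?_
    rw [_root_.map_mul, hCval, Matrix.submatrix_apply]
    rw [hMC]
    rfl
  -- stability reformulation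
  have hstab : (∀ w ∈ Submodule.span R
      (Set.range fun j : Fin r => fun a : Fin s => algebraMap k R (A a j)),
      Mm.mulVec w ∈ Submodule.span R
      (Set.range fun j : Fin r => fun a : Fin s => algebraMap k R (A a j))) ↔
      ∀ j : Fin r, Mm.mulVec (fun a => C a j) ∈ Submodule.span R
        (Set.range fun j : Fin r => fun a : Fin s => algebraMap k R (A a j)) := by
    constructor
    · intro h j
      exact h _ (by rw [hspan1]; exact Submodule.subset_span ⟨j, rfl⟩)
    · intro h w hw
      rw [hspan1] at hw ⊢
      have hle : Submodule.span R (Set.range fun j : Fin r => fun a : Fin s => C a j)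
          ≤ Submodule.comap (Matrix.mulVecLin Mm)
            (Submodule.span R (Set.range fun j : Fin r => fun a : Fin s => C a j)) := by
        rw [Submodule.span_le]
        rintro _ ⟨j, rfl⟩
        rw [SetLike.mem_coe, Submodule.mem_comap, Matrix.mulVecLin_apply]
        have h2 := h j
        rw [hspan1] at h2
        exact h2
      have h3 := hle hw
      rw [Submodule.mem_comap, Matrix.mulVecLin_apply] at h3
      exact h3
  have hmem : ∀ j : Fin r, (Mm.mulVec (fun a => C a j) ∈ Submodule.span R
      (Set.range fun j : Fin r => fun a : Fin s => algebraMap k R (A a j))) ↔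
      ∀ a : Fin s, (∑ ℓ, C a ℓ * N (idx ℓ) j) = N a j := by
    intro j
    rw [hspan1, mem_span_cols_iff idx C hC1]
    have hcol : Mm.mulVec (fun a => C a j) = fun a => N a j := by
      funext a
      simp [Matrix.mulVec, dotProduct, hN, Matrix.mul_apply]
    rw [hcol, _root_.funext_iff]
    refine forall_congr' fun a => ?_
    have : C.mulVec (fun ℓ => N (idx ℓ) j) a = ∑ ℓ, C a ℓ * N (idx ℓ) j := by
      simp [Matrix.mulVec, dotProduct]
    rw [this]
  have hauto : ∀ (ℓ : Fin r) (j : Fin r), (∑ m, C (idx ℓ) m * N (idx m) j) = N (idx ℓ) j := by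
    intro ℓ j
    have h1 : ∀ m, C (idx ℓ) m = (1 : Matrix (Fin r) (Fin r) R) ℓ m := by
      intro m; rw [← hC1]; rfl
    simp [h1, Matrix.one_apply]
  rw [hstab, forall_congr' hmem]
  constructor
  · intro h a ha j
    rw [hEval, sub_eq_zero]
    exact (h j a).symm
  · intro h j a
    by_cases ha : a ∈ Set.range idx
    · obtain ⟨ℓ, rfl⟩ := ha
      exact hauto ℓ j
    · have h2 := h a ha j
      rw [hEval, sub_eq_zero] at h2
      exact h2.symm

end UDS




/-- **Uniform definability of stabilizers (Lemma 4.3).** Fix `n, s ≥ 1`, `1 ≤ r ≤ s`,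
strictly increasing indices `i₁ < ⋯ < i_r` in `Fin s`, `d ≥ 0`, and an `s × s` matrix `B`
of integer polynomials in `2n²` variables (indexed by `Fin 2 × Fin n × Fin n`, the first
component distinguishing the entries of `g` from those of `g⁻¹`) of total degree at most
`d`. Then there exist `(s−r)·r` polynomials `Q₁, …, Q_{(s−r)r}` with integer coefficients
in the `sr` entries of an `s × r` matrix of variables `T` (indexed by `Fin s × Fin r`),
in one further variable standing for the inverse of `det((T_{i_ℓ,j})_{1≤ℓ,j≤r})` (the
`Unit` summand), and in the `2n²` variables, in which their degree is at most `d`, such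
that: for every field `k`, every `A ∈ k^{s×r}` with `det((A_{i_ℓ,j})) ≠ 0`, every
commutative `k`-algebra `R` and every `g ∈ GLₙ(R)`, the `R`-submodule of `R^s` generated
by the columns of `A` is stable under `B(g, g⁻¹)` if and only if `Qᵢ(A, g, g⁻¹) = 0`
for all `i`. -/
theorem uniform_definability_of_stabilizers
    {n s r : ℕ} (hn : 1 ≤ n) (hs : 1 ≤ s) (hr : 1 ≤ r) (hrs : r ≤ s)
    (idx : Fin r → Fin s) (hidx : StrictMono idx) (d : ℕ)
    (B : Matrix (Fin s) (Fin s) (MvPolynomial (Fin 2 × Fin n × Fin n) ℤ))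
    (hB : ∀ a b, (B a b).totalDegree ≤ d) :
    ∃ Q : Fin ((s - r) * r) →
        MvPolynomial ((Fin s × Fin r) ⊕ (Unit ⊕ (Fin 2 × Fin n × Fin n))) ℤ,
      (∀ q, ∀ mono ∈ (Q q).support,
          ∑ v : Fin 2 × Fin n × Fin n, mono (Sum.inr (Sum.inr v)) ≤ d) ∧
      ∀ (k : Type*) [Field k] (A : Matrix (Fin s) (Fin r) k)
        (_ : Matrix.det (A.submatrix idx id) ≠ 0)
        (R : Type*) [CommRing R] [Algebra k R] (g : Matrix.GeneralLinearGroup (Fin n) R),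
        ((∀ w ∈ Submodule.span R
            (Set.range fun j : Fin r => fun a : Fin s => algebraMap k R (A a j)),
          (B.map fun p => MvPolynomial.aeval
              (fun v : Fin 2 × Fin n × Fin n =>
                if v.1 = 0 then (g : Matrix (Fin n) (Fin n) R) v.2.1 v.2.2
                else ((g⁻¹ : Matrix.GeneralLinearGroup (Fin n) R) :
                  Matrix (Fin n) (Fin n) R) v.2.1 v.2.2) p).mulVec w ∈
            Submodule.span R
              (Set.range fun j : Fin r => fun a : Fin s => algebraMap k R (A a j))) ↔
          ∀ q, MvPolynomial.aeval
            (Sum.elim (fun p : Fin s × Fin r => algebraMap k R (A p.1 p.2))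
              (Sum.elim
                (fun _ : Unit => algebraMap k R (Matrix.det (A.submatrix idx id))⁻¹)
                (fun v : Fin 2 × Fin n × Fin n =>
                  if v.1 = 0 then (g : Matrix (Fin n) (Fin n) R) v.2.1 v.2.2
                  else ((g⁻¹ : Matrix.GeneralLinearGroup (Fin n) R) :
                    Matrix (Fin n) (Fin n) R) v.2.1 v.2.2)))
            (Q q) = 0) := by
  classical
  have h1 : Fintype.card {a : Fin s // a ∈ Set.range idx} = r := by
    have h := Set.card_range_of_injective hidx.injective (f := idx)
    rw [Fintype.card_fin] at h
    exact (Fintype.card_congr (Equiv.refl _)).trans h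
  have hcard : Fintype.card {a : Fin s // a ∉ Set.range idx} = s - r := by
    rw [Fintype.card_subtype_compl, h1, Fintype.card_fin]
  let e : ({a : Fin s // a ∉ Set.range idx} × Fin r) ≃ Fin ((s - r) * r) :=
    (Equiv.prodCongr (Fintype.equivFinOfCardEq hcard) (Equiv.refl (Fin r))).trans finProdFinEquiv
  refine ⟨fun q => UDS.Emat n idx B ((e.symm q).1 : Fin s) (e.symm q).2, ?_, ?_⟩
  · intro q mono hm
    exact UDS.Emat_GDle idx B hB _ _ mono hm
  · intro k _ A hA R _ _ g
    refine (UDS.main_aux idx B A hA R _).trans ?_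
    constructor
    · intro h q
      exact h _ (e.symm q).1.2 _
    · intro h a ha j
      have h2 := h (e ⟨⟨a, ha⟩, j⟩)
      simpa only [Equiv.symm_apply_apply] using h2
end
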